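/- Let U ⊆ ℝ⁴ be open and convex with coordinates (u,v,x,y), let ξ_ℓ, ξ_n : U → ℝ and ξ_m : U → ℂ be smooth with ξ_m̄ := conjugate of ξ_m, satisfying the residual radiation-gauge conditions: ∂_u ξ_ℓ = 0; ∂_u ξ_m̄ − ∂_ζ ξ_ℓ = 0; ∂_u ξ_m − ∂_ζ̄ ξ_ℓ = 0; ∂_u ξ_n + ∂_v ξ_ℓ = 0; ∂_ζ̄ ξ_m̄ + ∂_ζ ξ_m = 0. Then for every point p ∈ U there are an open neighborhood W and smooth functions f₁, f₂, f₃, f₄ : W → ℂ with ∂_u f₁ = ∂_ζ̄ f₁ = 0, ∂_u f₂ = ∂_ζ f₂ = 0, ∂_u f₃ = 0, ∂_u f₄ = 0, such that on W: ξ_ℓ = f₁ + f₂, ξ_m̄ = u·∂_ζ f₁ + f₃, and ξ_n = −u·(∂_v f₁ + ∂_v f₂) + f₄. -/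

import Mathlib

/- Coordinates (u,v,x,y) = indices (0,1,2,3) on ℝ⁴;
   ζ = (x+iy)/√2, ∂_ζ = (∂_x − i∂_y)/√2, ∂_ζ̄ = (∂_x + i∂_y)/√2. -/

noncomputable section

abbrev V4 : Type := Fin 4 → ℝ

/-- Partial derivative of a complex-valued function in coordinate direction `i`. -/
def pdC (i : Fin 4) (f : V4 → ℂ) : V4 → ℂ :=
  fun x => fderiv ℝ f x (Pi.single i 1)

/-- Partial derivative of a real-valued function in coordinate direction `i`. -/
def pdR (i : Fin 4) (f : V4 → ℝ) : V4 → ℝ :=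
  fun x => fderiv ℝ f x (Pi.single i 1)

/-- Wirtinger derivative ∂_ζ = (∂_x - i ∂_y)/√2. -/
def pdZ (f : V4 → ℂ) : V4 → ℂ :=
  fun x => (pdC 2 f x - Complex.I * pdC 3 f x) / (Real.sqrt 2 : ℂ)

/-- Wirtinger derivative ∂_ζ̄ = (∂_x + i ∂_y)/√2. -/
def pdZb (f : V4 → ℂ) : V4 → ℂ :=
  fun x => (pdC 2 f x + Complex.I * pdC 3 f x) / (Real.sqrt 2 : ℂ)

/-- The coordinate function ζ = (x+iy)/√2. -/
def zeta (x : V4) : ℂ := ((x 2 : ℂ) + Complex.I * (x 3 : ℂ)) / (Real.sqrt 2 : ℂ)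

/-- The coordinate function ζ̄ = (x−iy)/√2. -/
def zbar (x : V4) : ℂ := ((x 2 : ℂ) - Complex.I * (x 3 : ℂ)) / (Real.sqrt 2 : ℂ)

/-! ### Auxiliary machinery -/

open Metric MeasureTheory intervalIntegral Set

set_option maxHeartbeats 2000000

namespace Stmt14Aux

lemma sq2_ne : ((Real.sqrt 2 : ℝ) : ℂ) ≠ 0 := by norm_cast; positivity

lemma sq2_sq : ((Real.sqrt 2 : ℝ) : ℂ) * ((Real.sqrt 2 : ℝ) : ℂ) = 2 := by
  norm_cast; exact Real.mul_self_sqrt (by norm_num)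

lemma pdC_smooth {U : Set V4} (hU : IsOpen U) {f : V4 → ℂ}
    (hf : ContDiffOn ℝ (⊤:ℕ∞) f U) (i : Fin 4) : ContDiffOn ℝ (⊤:ℕ∞) (pdC i f) U := by
  have h1 : ContDiffOn ℝ (⊤:ℕ∞) (fderiv ℝ f) U := hf.fderiv_of_isOpen hU (by simp)
  exact h1.clm_apply contDiffOn_const

lemma diffAt {U : Set V4} (hU : IsOpen U) {f : V4 → ℂ}
    (hf : ContDiffOn ℝ (⊤:ℕ∞) f U) {x : V4} (hx : x ∈ U) : DifferentiableAt ℝ f x :=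
  (hf.differentiableOn (by simp) x hx).differentiableAt (hU.mem_nhds hx)

lemma pdC_congr {U : Set V4} (hU : IsOpen U) {f g : V4 → ℂ}
    (h : ∀ y ∈ U, f y = g y) {x : V4} (hx : x ∈ U) (i : Fin 4) :
    pdC i f x = pdC i g x := by
  have : f =ᶠ[nhds x] g := Filter.eventuallyEq_of_mem (hU.mem_nhds hx) h
  simp only [pdC, this.fderiv_eq]

lemma pdC_const (i : Fin 4) (c : ℂ) (x : V4) : pdC i (fun _ => c) x = 0 := by
  simp [pdC]

lemma pdC_congr_zero {U : Set V4} (hU : IsOpen U) {f : V4 → ℂ}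
    (h : ∀ y ∈ U, f y = 0) {x : V4} (hx : x ∈ U) (i : Fin 4) :
    pdC i f x = 0 := by
  rw [pdC_congr hU (g := fun _ => (0:ℂ)) h hx i, pdC_const]

lemma pdC_comm {U : Set V4} (hU : IsOpen U) {f : V4 → ℂ}
    (hf : ContDiffOn ℝ (⊤:ℕ∞) f U) {x : V4} (hx : x ∈ U) (i j : Fin 4) :
    pdC i (pdC j f) x = pdC j (pdC i f) x := by
  set f' := fderiv ℝ f with hf'def
  have hf' : ContDiffOn ℝ (⊤:ℕ∞) f' U := hf.fderiv_of_isOpen hU (by simp)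
  have hev : ∀ᶠ y in nhds x, HasFDerivAt f (f' y) y := by
    filter_upwards [hU.mem_nhds hx] with y hy
    exact (diffAt hU hf hy).hasFDerivAt
  have hdiff' : DifferentiableAt ℝ f' x :=
    (hf'.differentiableOn (by simp) x hx).differentiableAt (hU.mem_nhds hx)
  have hx'' : HasFDerivAt f' (fderiv ℝ f' x) x := hdiff'.hasFDerivAt
  have symm := second_derivative_symmetric_of_eventually hev hx''
  have key : ∀ k l : Fin 4, pdC k (pdC l f) x = fderiv ℝ f' x (Pi.single k 1) (Pi.single l 1) := by
    intro k l
    have : pdC l f = fun y => f' y (Pi.single l 1) := rfl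
    rw [pdC, this, fderiv_clm_apply hdiff' (differentiableAt_const _)]
    simp
  rw [key i j, key j i, symm]

lemma pdC_add {a b : V4 → ℂ} {x : V4} (ha : DifferentiableAt ℝ a x)
    (hb : DifferentiableAt ℝ b x) (i : Fin 4) :
    pdC i (fun y => a y + b y) x = pdC i a x + pdC i b x := by
  simp only [pdC]; rw [fderiv_fun_add ha hb]; simp

lemma pdC_sub {a b : V4 → ℂ} {x : V4} (ha : DifferentiableAt ℝ a x)
    (hb : DifferentiableAt ℝ b x) (i : Fin 4) :
    pdC i (fun y => a y - b y) x = pdC i a x - pdC i b x := by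
  simp only [pdC]; rw [fderiv_fun_sub ha hb]; simp

lemma pdC_comb {a b : V4 → ℂ} {x : V4} (ha : DifferentiableAt ℝ a x)
    (hb : DifferentiableAt ℝ b x) (i : Fin 4) (c₁ c₂ : ℂ) :
    pdC i (fun y => (a y + c₂ * b y) / c₁) x = (pdC i a x + c₂ * pdC i b x) / c₁ := by
  have hb' : DifferentiableAt ℝ (fun y => c₂ * b y) x := hb.const_mul c₂
  simp only [pdC, div_eq_inv_mul]
  rw [fderiv_const_mul (a := fun y => a y + c₂ * b y) (ha.add hb') c₁⁻¹, fderiv_fun_add ha hb', fderiv_const_mul hb c₂]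
  simp [mul_add]

lemma pdC_comb' {a b : V4 → ℂ} {x : V4} (ha : DifferentiableAt ℝ a x)
    (hb : DifferentiableAt ℝ b x) (i : Fin 4) (c₁ c₂ : ℂ) :
    pdC i (fun y => (a y - c₂ * b y) / c₁) x = (pdC i a x - c₂ * pdC i b x) / c₁ := by
  have h1 : (fun y => (a y - c₂ * b y) / c₁) = fun y => (a y + (-c₂) * b y) / c₁ := by
    funext y; ring
  rw [h1, pdC_comb ha hb i c₁ (-c₂)]; ring

lemma pdC_mul {a b : V4 → ℂ} {x : V4} (ha : DifferentiableAt ℝ a x)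
    (hb : DifferentiableAt ℝ b x) (i : Fin 4) :
    pdC i (fun y => a y * b y) x = a x * pdC i b x + pdC i a x * b x := by
  simp only [pdC]
  rw [fderiv_fun_mul ha hb]
  simp [mul_comm]

lemma pdC_ofReal {a : V4 → ℝ} {x : V4} (ha : DifferentiableAt ℝ a x) (i : Fin 4) :
    pdC i (fun y => (a y : ℂ)) x = (pdR i a x : ℂ) := by
  simp only [pdC, pdR]
  have : (fun y => (a y : ℂ)) = Complex.ofRealCLM ∘ a := rfl
  rw [this, fderiv_comp x Complex.ofRealCLM.differentiableAt ha]
  simp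

/-- `pdZ` and `pdZb` are smooth. -/
lemma pdZ_smooth {U : Set V4} (hU : IsOpen U) {f : V4 → ℂ}
    (hf : ContDiffOn ℝ (⊤:ℕ∞) f U) : ContDiffOn ℝ (⊤:ℕ∞) (pdZ f) U := by
  have h2 := pdC_smooth hU hf 2
  have h3 := pdC_smooth hU hf 3
  exact ((h2.sub (contDiffOn_const.mul h3)).div_const _)

lemma pdZb_smooth {U : Set V4} (hU : IsOpen U) {f : V4 → ℂ}
    (hf : ContDiffOn ℝ (⊤:ℕ∞) f U) : ContDiffOn ℝ (⊤:ℕ∞) (pdZb f) U := by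
  have h2 := pdC_smooth hU hf 2
  have h3 := pdC_smooth hU hf 3
  exact ((h2.add (contDiffOn_const.mul h3)).div_const _)

lemma pdZ_sub {a b : V4 → ℂ} {U : Set V4} (hU : IsOpen U)
    (ha : ContDiffOn ℝ (⊤:ℕ∞) a U) (hb : ContDiffOn ℝ (⊤:ℕ∞) b U)
    {x : V4} (hx : x ∈ U) :
    pdZ (fun y => a y - b y) x = pdZ a x - pdZ b x := by
  simp only [pdZ]
  rw [pdC_sub (diffAt hU ha hx) (diffAt hU hb hx),
      pdC_sub (diffAt hU ha hx) (diffAt hU hb hx)]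
  ring

lemma pdZb_sub {a b : V4 → ℂ} {U : Set V4} (hU : IsOpen U)
    (ha : ContDiffOn ℝ (⊤:ℕ∞) a U) (hb : ContDiffOn ℝ (⊤:ℕ∞) b U)
    {x : V4} (hx : x ∈ U) :
    pdZb (fun y => a y - b y) x = pdZb a x - pdZb b x := by
  simp only [pdZb]
  rw [pdC_sub (diffAt hU ha hx) (diffAt hU hb hx),
      pdC_sub (diffAt hU ha hx) (diffAt hU hb hx)]
  ring

/-! ### Segment machinery -/

def mk4 : Fin 4 → ℝ := fun i => if i = 2 ∨ i = 3 then 1 else 0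

def seg (p x : V4) (t : ℝ) : V4 := fun i => (1 + (t - 1) * mk4 i) * x i - (t - 1) * mk4 i * p i

lemma seg_one (p x : V4) : seg p x 1 = x := by ext i; simp [seg]

def segA (t : ℝ) : V4 →L[ℝ] V4 :=
  ContinuousLinearMap.pi (fun i => (1 + (t - 1) * mk4 i) • ContinuousLinearMap.proj i)

lemma hasFDerivAt_seg (p : V4) (t : ℝ) (x : V4) :
    HasFDerivAt (fun x => seg p x t) (segA t) x := by
  apply hasFDerivAt_pi.2
  intro i
  have : (fun x : V4 => seg p x t i) = fun x => (1 + (t - 1) * mk4 i) * x i - (t - 1) * mk4 i * p i := rfl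
  rw [this]
  exact (((hasFDerivAt_apply i x).const_mul _).sub_const _)

def dvec (p x : V4) : V4 := fun i => mk4 i * (x i - p i)

lemma hasDerivAt_seg (p x : V4) (t : ℝ) :
    HasDerivAt (fun t => seg p x t) (dvec p x) t := by
  apply hasDerivAt_pi.2
  intro i
  have : (fun t : ℝ => seg p x t i) = fun t => (1 + (t - 1) * mk4 i) * x i - (t - 1) * mk4 i * p i := rfl
  rw [this]
  have h1 : HasDerivAt (fun t : ℝ => 1 + (t - 1) * mk4 i) (mk4 i) t := by
    simpa using ((hasDerivAt_id t).sub_const 1 |>.mul_const (mk4 i)).const_add 1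
  have h2 : HasDerivAt (fun t : ℝ => (t - 1) * mk4 i * p i) (mk4 i * p i) t := by
    simpa using (((hasDerivAt_id t).sub_const 1).mul_const (mk4 i)).mul_const (p i)
  simpa [dvec, mul_sub] using (h1.mul_const (x i)).fun_sub h2

lemma contDiff_seg (p : V4) : ContDiff ℝ (⊤:ℕ∞) (fun q : V4 × ℝ => seg p q.1 q.2) := by
  apply contDiff_pi.2
  intro i
  have : (fun q : V4 × ℝ => seg p q.1 q.2 i)
      = fun q : V4 × ℝ => (1 + (q.2 - 1) * mk4 i) * q.1 i - (q.2 - 1) * mk4 i * p i := rfl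
  rw [this]
  fun_prop

lemma seg_mem_ball {p x : V4} {r : ℝ} (hr : 0 < r) (hx : x ∈ ball p r) {t : ℝ}
    (ht : t ∈ Set.Icc (0:ℝ) 1) : seg p x t ∈ ball p r := by
  rw [mem_ball, dist_pi_lt_iff hr] at hx ⊢
  intro i
  have key : seg p x t i - p i = (1 + (t - 1) * mk4 i) * (x i - p i) := by
    simp [seg]; ring
  have hfac : |1 + (t - 1) * mk4 i| ≤ 1 := by
    simp only [mk4]
    split
    · rw [abs_le]; constructor <;> nlinarith [ht.1, ht.2]
    · simp
  calc dist (seg p x t i) (p i) = |1 + (t - 1) * mk4 i| * |x i - p i| := by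
        rw [Real.dist_eq, key, abs_mul]
    _ ≤ 1 * |x i - p i| := by gcongr
    _ < r := by rw [one_mul, ← Real.dist_eq]; exact hx i

lemma continuous_segA : Continuous segA := by
  have : segA = fun t => (ContinuousLinearMap.pi (fun i : Fin 4 =>
      (1 - mk4 i) • ContinuousLinearMap.proj i))
      + t • (ContinuousLinearMap.pi (fun i : Fin 4 =>
        mk4 i • ContinuousLinearMap.proj (R := ℝ) (φ := fun _ : Fin 4 => ℝ) i)) := by
    funext t
    ext v i
    simp [segA, ContinuousLinearMap.pi_apply]
    ring
  rw [this]
  exact continuous_const.add (continuous_id.smul continuous_const)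

lemma segA_single (t : ℝ) (i : Fin 4) :
    segA t (Pi.single i 1) = (1 + (t - 1) * mk4 i) • (Pi.single i 1 : V4) := by
  ext j
  simp only [segA, ContinuousLinearMap.pi_apply, ContinuousLinearMap.smul_apply,
    ContinuousLinearMap.proj_apply, Pi.smul_apply, smul_eq_mul]
  rcases eq_or_ne j i with rfl | hj
  · simp
  · simp [Pi.single_eq_of_ne hj]

/-- Smoothness of `x ↦ ∫ t in 0..1, G (seg p x t)` via convolution machinery. -/
lemma contDiff_hInt (p : V4) (G : V4 → ℂ) (hG : ContDiff ℝ (⊤:ℕ∞) G) :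
    ContDiff ℝ (⊤:ℕ∞) (fun x => ∫ t in (0:ℝ)..1, G (seg p x t)) := by
  set ψ : ContDiffBump ((-1/2 : ℝ)) := ⟨3/4, 1, by norm_num, by norm_num⟩ with hψ
  set ff : ℝ → ℝ := Set.indicator (Set.Ioc (0:ℝ) 1) 1 with hff
  set gg : V4 → ℝ → ℂ := fun x τ => ψ τ • G (seg p x (-τ)) with hgg
  set L : ℝ →L[ℝ] ℂ →L[ℝ] ℂ := ContinuousLinearMap.lsmul ℝ ℝ with hL
  have hfint : Integrable ff := by
    rw [hff, integrable_indicator_iff measurableSet_Ioc]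
    exact integrableOn_const measure_Ioc_lt_top.ne
  have hgs : ∀ q x, q ∈ (Set.univ : Set V4) → x ∉ Metric.closedBall (-1/2 : ℝ) 1 → gg q x = 0 := by
    intro q x _ hx
    have : ψ x = 0 := by
      have := ψ.support_eq
      by_contra h
      exact hx (ball_subset_closedBall (this ▸ Function.mem_support.2 h))
    simp [hgg, this]
  have hg : ContDiffOn ℝ (⊤:ℕ∞) (Function.uncurry gg) ((Set.univ : Set V4) ×ˢ Set.univ) := by
    apply ContDiff.contDiffOn
    exact (ψ.contDiff.comp contDiff_snd).smul
      (hG.comp ((contDiff_seg p).comp (contDiff_fst.prodMk contDiff_snd.neg)))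
  have key := contDiffOn_convolution_right_with_param_comp L
    (v := fun _ : V4 => (0:ℝ)) contDiffOn_const isOpen_univ (isCompact_closedBall _ _) hgs
    hfint.locallyIntegrable hg
  rw [← contDiffOn_univ]
  apply key.congr
  intro x _
  rw [convolution]
  have h1 : ∀ τ : ℝ, (L (ff τ)) (gg x (0 - τ)) = Set.indicator (Set.Ioc (0:ℝ) 1)
      (fun τ => ψ (-τ) • G (seg p x τ)) τ := by
    intro τ
    by_cases hτ : τ ∈ Set.Ioc (0:ℝ) 1
    · simp [hff, hgg, Set.indicator_of_mem hτ, hL, neg_neg]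
    · simp [hff, hgg, Set.indicator_of_notMem hτ, hL]
  rw [MeasureTheory.integral_congr_ae (Filter.Eventually.of_forall h1),
    MeasureTheory.integral_indicator measurableSet_Ioc]
  rw [intervalIntegral.integral_of_le zero_le_one]
  apply MeasureTheory.setIntegral_congr_fun measurableSet_Ioc
  intro τ hτ
  have : ψ (-τ) = 1 := by
    apply ψ.one_of_mem_closedBall
    show dist (-τ) (-1/2 : ℝ) ≤ (3/4 : ℝ)
    rw [Real.dist_eq, abs_le]
    constructor <;> nlinarith [hτ.1, hτ.2]
  simp [this]

/-- Derivative of `x ↦ ∫ t in 0..1, G (seg p x t)`. -/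
theorem hasFDerivAt_hInt (p : V4) (G : V4 → ℂ) (hG : ContDiff ℝ (⊤:ℕ∞) G) (x : V4) :
    HasFDerivAt (fun x => ∫ t in (0:ℝ)..1, G (seg p x t))
      (∫ t in (0:ℝ)..1, (fderiv ℝ G (seg p x t)).comp (segA t)) x := by
  have hGd : Differentiable ℝ G := hG.differentiable (by simp)
  have hGc1 : Continuous (fderiv ℝ G) := hG.continuous_fderiv (by simp)
  have hsegc : Continuous (fun q : V4 × ℝ => seg p q.1 q.2) := (contDiff_seg p).continuous
  set F' : V4 → ℝ → V4 →L[ℝ] ℂ := fun x' t => (fderiv ℝ G (seg p x' t)).comp (segA t) with hF'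
  have hF'cont : Continuous (fun q : V4 × ℝ => F' q.1 q.2) := by
    apply Continuous.clm_comp
    · exact hGc1.comp hsegc
    · exact continuous_segA.comp continuous_snd
  obtain ⟨C, hC⟩ : ∃ C, ∀ q ∈ (closedBall x 1) ×ˢ (Set.uIcc (0:ℝ) 1), ‖F' q.1 q.2‖ ≤ C := by
    rcases ((isCompact_closedBall x 1).prod isCompact_uIcc).exists_bound_of_continuousOn
      hF'cont.norm.continuousOn with ⟨C, hC⟩
    exact ⟨C, fun q hq => le_of_abs_le (hC q hq)⟩
  apply intervalIntegral.hasFDerivAt_integral_of_dominated_of_fderiv_le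
    (F := fun x' t => G (seg p x' t)) (F' := F') (bound := fun _ => C) (s := ball x 1) (ball_mem_nhds x one_pos)
  · filter_upwards with x'
    exact ((hGd.continuous.comp (hsegc.comp (Continuous.prodMk_right x'))).aestronglyMeasurable)
  · exact ((hGd.continuous.comp (hsegc.comp (Continuous.prodMk_right x))).intervalIntegrable 0 1)
  · exact (hF'cont.comp (Continuous.prodMk_right x)).aestronglyMeasurable
  · filter_upwards with t ht x' hx'
    exact hC (x', t) ⟨ball_subset_closedBall hx', Set.uIoc_subset_uIcc ht⟩
  · exact intervalIntegrable_const
  · filter_upwards with t ht x' hx'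
    exact (hGd (seg p x' t)).hasFDerivAt.comp x' (hasFDerivAt_seg p t x')


lemma coordC_contDiff (j : Fin 4) : ContDiff ℝ (⊤:ℕ∞) (fun y : V4 => ((y j : ℝ) : ℂ)) :=
  Complex.ofRealCLM.contDiff.comp (contDiff_pi.1 contDiff_id j)

lemma pdR_coord (i j : Fin 4) (x : V4) :
    pdR i (fun y => y j) x = if i = j then 1 else 0 := by
  have : (fun y : V4 => y j) = (ContinuousLinearMap.proj j : V4 →L[ℝ] ℝ) := rfl
  simp only [pdR, this, ContinuousLinearMap.fderiv, ContinuousLinearMap.proj_apply]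
  rw [Pi.single_apply]
  simp [eq_comm]

lemma pdC_coord (i j : Fin 4) (x : V4) :
    pdC i (fun y => ((y j : ℝ) : ℂ)) x = if i = j then 1 else 0 := by
  rw [pdC_ofReal (by fun_prop) i, pdR_coord]
  split <;> norm_num

lemma contDiff_zeta : ContDiff ℝ (⊤:ℕ∞) zeta := by
  have : zeta = fun y : V4 => (((y 2:ℝ):ℂ) + Complex.I * ((y 3:ℝ):ℂ)) / (Real.sqrt 2 : ℂ) := rfl
  rw [this]
  exact (((coordC_contDiff 2).add (contDiff_const.mul (coordC_contDiff 3))).div_const _)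

lemma pdC_zeta (i : Fin 4) (x : V4) :
    pdC i zeta x
      = ((if i = 2 then 1 else 0) + Complex.I * (if i = 3 then 1 else 0)) / (Real.sqrt 2 : ℂ) := by
  have hd2 : DifferentiableAt ℝ (fun y : V4 => ((y 2 : ℝ):ℂ)) x :=
    (coordC_contDiff 2).differentiable (by simp) x
  have hd3 : DifferentiableAt ℝ (fun y : V4 => ((y 3 : ℝ):ℂ)) x :=
    (coordC_contDiff 3).differentiable (by simp) x
  have h1 : pdC i zeta x = (pdC i (fun y : V4 => ((y 2:ℝ):ℂ)) x
      + Complex.I * pdC i (fun y : V4 => ((y 3:ℝ):ℂ)) x) / (Real.sqrt 2 : ℂ) :=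
    pdC_comb hd2 hd3 i _ _
  rw [h1, pdC_coord, pdC_coord]

lemma pdC_zl (p : V4) (i : Fin 4) (x : V4) :
    pdC i (fun y => zeta y - zeta p) x
      = ((if i = 2 then 1 else 0) + Complex.I * (if i = 3 then 1 else 0)) / (Real.sqrt 2 : ℂ) := by
  have := pdC_sub (x := x) (contDiff_zeta.differentiable (by simp) x)
    (differentiableAt_const (zeta p)) i
  rw [this, pdC_const, sub_zero, pdC_zeta]


lemma exists_primitive (p : V4) (r : ℝ) (hr : 0 < r) (G : V4 → ℂ) (hG : ContDiff ℝ (⊤:ℕ∞) G)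
    (hzb : ∀ y ∈ ball p r, pdZb G y = 0) (hu0 : ∀ y ∈ ball p r, pdC 0 G y = 0) :
    ∃ F : V4 → ℂ, ContDiff ℝ (⊤:ℕ∞) F ∧ ∀ x ∈ ball p r,
      pdC 0 F x = 0 ∧ pdZb F x = 0 ∧ pdZ F x = G x := by
  classical
  set S : ℂ := ((Real.sqrt 2 : ℝ) : ℂ) with hS
  have hSne : S ≠ 0 := sq2_ne
  have hS2 : S * S = 2 := sq2_sq
  set h : V4 → ℂ := fun x => ∫ t in (0:ℝ)..1, G (seg p x t) with hh
  have hhsm : ContDiff ℝ (⊤:ℕ∞) h := contDiff_hInt p G hG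
  set zl : V4 → ℂ := fun y => zeta y - zeta p with hzl
  have hzlsm : ContDiff ℝ (⊤:ℕ∞) zl := contDiff_zeta.sub contDiff_const
  refine ⟨fun y => zl y * h y, hzlsm.mul hhsm, ?_⟩
  intro x hx
  -- continuity facts
  have hGd : Differentiable ℝ G := hG.differentiable (by simp)
  have hGc : Continuous G := hG.continuous
  have hpdc : ∀ i, Continuous (pdC i G) :=
    fun i => (hG.continuous_fderiv (by simp)).clm_apply continuous_const
  have hsegc : ∀ x' : V4, Continuous (fun t => seg p x' t) := fun x' =>
    (contDiff_seg p).continuous.comp (Continuous.prodMk_right x')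
  -- derivative of h
  have hfd : ∀ x' : V4, fderiv ℝ h x' = ∫ t in (0:ℝ)..1, (fderiv ℝ G (seg p x' t)).comp (segA t) :=
    fun x' => (hasFDerivAt_hInt p G hG x').fderiv
  have hInt' : ∀ x' : V4, IntervalIntegrable
      (fun t => (fderiv ℝ G (seg p x' t)).comp (segA t)) volume 0 1 := by
    intro x'
    apply Continuous.intervalIntegrable
    exact Continuous.clm_comp ((hG.continuous_fderiv (by simp)).comp (hsegc x'))
      continuous_segA
  have pdC_h : ∀ (x' : V4) (i : Fin 4), pdC i h x'
      = ∫ t in (0:ℝ)..1, ((1 + (t-1) * mk4 i) : ℝ) • pdC i G (seg p x' t) := by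
    intro x' i
    have : pdC i h x' = (fderiv ℝ h x') (Pi.single i 1) := rfl
    rw [this, hfd x', ContinuousLinearMap.intervalIntegral_apply (hInt' x')]
    refine intervalIntegral.integral_congr fun t _ => ?_
    rw [ContinuousLinearMap.comp_apply, segA_single, ContinuousLinearMap.map_smul]
    rfl
  have hcont_i : ∀ (x' : V4) (i : Fin 4), Continuous
      (fun t : ℝ => ((1 + (t-1) * mk4 i) : ℝ) • pdC i G (seg p x' t)) := by
    intro x' i
    exact ((continuous_const.add (((continuous_id.sub continuous_const)).mul
      continuous_const)).smul ((hpdc i).comp (hsegc x')))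
  have hmem : ∀ t ∈ Set.uIcc (0:ℝ) 1, seg p x t ∈ ball p r := by
    intro t ht
    rw [Set.uIcc_of_le zero_le_one] at ht
    exact seg_mem_ball hr hx ht
  -- (1) pdC 0 h x = 0
  have hpd0h : pdC 0 h x = 0 := by
    rw [pdC_h x 0]
    rw [intervalIntegral.integral_congr (g := fun _ => (0:ℂ))
      (fun t ht => by
        have h0 : mk4 0 = 0 := rfl
        rw [h0]
        simp [hu0 _ (hmem t ht)]),
      intervalIntegral.integral_const]
    simp
  -- weighted formulas for indices 2, 3
  have h2 : pdC 2 h x = ∫ t in (0:ℝ)..1, (t:ℝ) • pdC 2 G (seg p x t) := by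
    rw [pdC_h x 2]
    refine intervalIntegral.integral_congr fun t _ => ?_
    have : ((1 + (t-1) * mk4 2) : ℝ) = t := by norm_num [mk4]
    rw [this]
  have h3 : pdC 3 h x = ∫ t in (0:ℝ)..1, (t:ℝ) • pdC 3 G (seg p x t) := by
    rw [pdC_h x 3]
    refine intervalIntegral.integral_congr fun t _ => ?_
    have : ((1 + (t-1) * mk4 3) : ℝ) = t := by norm_num [mk4]
    rw [this]
  have hi2 : IntervalIntegrable (fun t : ℝ => (t:ℝ) • pdC 2 G (seg p x t)) volume 0 1 :=
    ((continuous_id.smul ((hpdc 2).comp (hsegc x)))).intervalIntegrable 0 1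
  have hi3 : IntervalIntegrable (fun t : ℝ => (t:ℝ) • pdC 3 G (seg p x t)) volume 0 1 :=
    ((continuous_id.smul ((hpdc 3).comp (hsegc x)))).intervalIntegrable 0 1
  -- (2) pdZb h x = 0
  have hzbh : pdZb h x = 0 := by
    have hcomb : pdC 2 h x + Complex.I * pdC 3 h x
        = ∫ t in (0:ℝ)..1, ((t:ℝ) • pdC 2 G (seg p x t)
            + Complex.I * ((t:ℝ) • pdC 3 G (seg p x t))) := by
      rw [h2, h3, intervalIntegral.integral_add hi2 (hi3.const_mul Complex.I),
        intervalIntegral.integral_const_mul]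
    have hzero : (∫ t in (0:ℝ)..1, ((t:ℝ) • pdC 2 G (seg p x t)
        + Complex.I * ((t:ℝ) • pdC 3 G (seg p x t)))) = 0 := by
      rw [intervalIntegral.integral_congr (g := fun _ => (0:ℂ)) (fun t ht => ?_),
        intervalIntegral.integral_const, smul_zero]
      have hz := hzb _ (hmem t ht)
      have hz' : pdC 2 G (seg p x t) + Complex.I * pdC 3 G (seg p x t) = 0 := by
        rw [pdZb] at hz
        field_simp at hz
        simpa using hz
      rw [Complex.real_smul, Complex.real_smul]
      linear_combination ((t:ℂ)) * hz'
    show (pdC 2 h x + Complex.I * pdC 3 h x) / S = 0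
    rw [hcomb, hzero, zero_div]
  -- (3) IBP
  set φ : ℝ → ℂ := fun t => G (seg p x t) with hφ
  set φ' : ℝ → ℂ := fun t => fderiv ℝ G (seg p x t) (dvec p x) with hφ'
  have hφd : ∀ t : ℝ, HasDerivAt φ (φ' t) t := fun t =>
    (hGd (seg p x t)).hasFDerivAt.comp_hasDerivAt t (hasDerivAt_seg p x t)
  have hφc : Continuous φ := hGc.comp (hsegc x)
  have hφ'c : Continuous φ' :=
    ((hG.continuous_fderiv (by simp)).comp (hsegc x)).clm_apply continuous_const
  have ibp : (∫ t in (0:ℝ)..1, ((t:ℝ):ℂ) * φ' t) = G x - h x := by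
    have hu' : ∀ t ∈ Set.Ioo (min (0:ℝ) 1) (max 0 1), HasDerivAt (fun t : ℝ => ((t:ℝ):ℂ)) 1 t := by
      intro t _
      simpa using (hasDerivAt_id t).ofReal_comp
    have hv' : ∀ t ∈ Set.Ioo (min (0:ℝ) 1) (max 0 1), HasDerivAt φ (φ' t) t := fun t _ => hφd t
    have key := intervalIntegral.integral_deriv_mul_eq_sub_of_hasDerivAt
      (u := fun t : ℝ => ((t:ℝ):ℂ)) (v := φ) (u' := fun _ => (1:ℂ)) (v' := φ')
      (Complex.continuous_ofReal.continuousOn) (hφc.continuousOn) hu' hv'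
      (continuous_const.intervalIntegrable 0 1) (hφ'c.intervalIntegrable 0 1)
    have hsplit : (∫ t in (0:ℝ)..1, ((1:ℂ) * φ t + ((t:ℝ):ℂ) * φ' t))
        = (∫ t in (0:ℝ)..1, φ t) + ∫ t in (0:ℝ)..1, ((t:ℝ):ℂ) * φ' t := by
      rw [intervalIntegral.integral_add (f := fun t => (1:ℂ) * φ t) (g := fun t => ((t:ℝ):ℂ) * φ' t) ((continuous_const.mul hφc).intervalIntegrable 0 1)
        ((Complex.continuous_ofReal.mul hφ'c).intervalIntegrable 0 1)]
      simp
    rw [hsplit] at key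
    have hφ1 : φ 1 = G x := by rw [hφ]; simp [seg_one]
    have hhx : (∫ t in (0:ℝ)..1, φ t) = h x := rfl
    rw [hhx, hφ1] at key
    push_cast at key ⊢
    linear_combination key
  -- (4) pointwise algebra
  have halg : ∀ t ∈ Set.uIcc (0:ℝ) 1, zl x * pdZ G (seg p x t) = φ' t := by
    intro t ht
    set s := seg p x t with hsdef
    have hA : pdC 2 G s + Complex.I * pdC 3 G s = 0 := by
      have hz := hzb s (hmem t ht)
      rw [pdZb] at hz
      field_simp at hz
      simpa using hz
    have hdv : dvec p x = (x 2 - p 2) • (Pi.single 2 1 : V4) + (x 3 - p 3) • (Pi.single 3 1 : V4) := by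
      ext i
      fin_cases i <;> simp [dvec, mk4]
    set a : ℂ := ((x 2 : ℝ):ℂ) - ((p 2 : ℝ):ℂ) with ha
    set b : ℂ := ((x 3 : ℝ):ℂ) - ((p 3 : ℝ):ℂ) with hb
    have hφ'eq : φ' t = a * pdC 2 G s + b * pdC 3 G s := by
      show fderiv ℝ G (seg p x t) (dvec p x) = _
      rw [hdv, ContinuousLinearMap.map_add, ContinuousLinearMap.map_smul,
        ContinuousLinearMap.map_smul, Complex.real_smul, Complex.real_smul]
      push_cast
      rfl
    have hzlx : zl x = (a + Complex.I * b) / S := by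
      show zeta x - zeta p = _
      show ((((x 2:ℝ):ℂ) + Complex.I * ((x 3:ℝ):ℂ)) / S)
        - ((((p 2:ℝ):ℂ) + Complex.I * ((p 3:ℝ):ℂ)) / S) = _
      rw [ha, hb]
      field_simp
      ring
    rw [hφ'eq, hzlx]
    show (a + Complex.I * b) / S * ((pdC 2 G s - Complex.I * pdC 3 G s) / S) = _
    have hA' : pdC 2 G s = -(Complex.I * pdC 3 G s) := by linear_combination hA
    rw [div_mul_div_comm, hS2, hA']
    linear_combination (-(b * pdC 3 G s)) * Complex.I_sq
  -- (5) z * pdZ h x = G x - h x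
  have hkey : zl x * pdZ h x = G x - h x := by
    have hcomb : pdC 2 h x - Complex.I * pdC 3 h x
        = ∫ t in (0:ℝ)..1, ((t:ℝ) • pdC 2 G (seg p x t)
            - Complex.I * ((t:ℝ) • pdC 3 G (seg p x t))) := by
      rw [h2, h3, intervalIntegral.integral_sub hi2 (hi3.const_mul Complex.I),
        intervalIntegral.integral_const_mul]
    have : zl x * pdZ h x = ∫ t in (0:ℝ)..1,
        zl x * (((t:ℝ) • pdC 2 G (seg p x t) - Complex.I * ((t:ℝ) • pdC 3 G (seg p x t))) / S) := by
      show zl x * ((pdC 2 h x - Complex.I * pdC 3 h x) / S) = _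
      rw [hcomb, ← intervalIntegral.integral_div, ← intervalIntegral.integral_const_mul]
    rw [this, ← ibp]
    refine intervalIntegral.integral_congr fun t ht => ?_
    rw [← halg t ht]
    rw [Complex.real_smul, Complex.real_smul]
    show zl x * ((((t:ℝ):ℂ) * pdC 2 G (seg p x t) - Complex.I * (((t:ℝ):ℂ) * pdC 3 G (seg p x t))) / S)
      = ((t:ℝ):ℂ) * (zl x * ((pdC 2 G (seg p x t) - Complex.I * pdC 3 G (seg p x t)) / S))
    ring
  -- final: product rule values
  have hzld : DifferentiableAt ℝ zl x := hzlsm.differentiable (by simp) x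
  have hhd : DifferentiableAt ℝ h x := hhsm.differentiable (by simp) x
  have hprod : ∀ i, pdC i (fun y => zl y * h y) x = zl x * pdC i h x + pdC i zl x * h x :=
    fun i => pdC_mul hzld hhd i
  have hzlval : ∀ i, pdC i zl x
      = ((if i = 2 then 1 else 0) + Complex.I * (if i = 3 then 1 else 0)) / S := fun i => pdC_zl p i x
  refine ⟨?_, ?_, ?_⟩
  · rw [hprod 0, hzlval 0, hpd0h]
    norm_num [show (0:Fin 4) ≠ 2 by decide, show (0:Fin 4) ≠ 3 by decide]
  · show (pdC 2 (fun y => zl y * h y) x + Complex.I * pdC 3 (fun y => zl y * h y) x) / S = 0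
    have hzl2 : pdC 2 zl x = 1/S := by rw [hzlval 2]; norm_num [show (2:Fin 4) ≠ 3 by decide]
    have hzl3 : pdC 3 zl x = Complex.I/S := by rw [hzlval 3]; norm_num [show (3:Fin 4) ≠ 2 by decide]
    rw [hprod 2, hprod 3, hzl2, hzl3]
    have hzbh' : pdC 2 h x + Complex.I * pdC 3 h x = 0 := by
      have hq : (pdC 2 h x + Complex.I * pdC 3 h x) / S = 0 := hzbh
      field_simp at hq
      simpa using hq
    field_simp
    linear_combination S * zl x * hzbh' + h x * Complex.I_sq + h x * hS2 - h x * hS2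
  · show (pdC 2 (fun y => zl y * h y) x - Complex.I * pdC 3 (fun y => zl y * h y) x) / S = G x
    have hzl2 : pdC 2 zl x = 1/S := by rw [hzlval 2]; norm_num [show (2:Fin 4) ≠ 3 by decide]
    have hzl3 : pdC 3 zl x = Complex.I/S := by rw [hzlval 3]; norm_num [show (3:Fin 4) ≠ 2 by decide]
    rw [hprod 2, hprod 3, hzl2, hzl3]
    have hkey' : zl x * pdC 2 h x - Complex.I * (zl x * pdC 3 h x) = (G x - h x) * S := by
      have hq : zl x * ((pdC 2 h x - Complex.I * pdC 3 h x) / S) = G x - h x := hkey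
      field_simp at hq
      linear_combination hq
    have hSsq : S ^ 2 = 2 := by rw [sq]; exact hS2
    field_simp
    linear_combination S * hkey' - h x * Complex.I_sq - h x * hSsq + h x * hS2 - h x * hS2

lemma diffAtR {U : Set V4} (hU : IsOpen U) {f : V4 → ℝ}
    (hf : ContDiffOn ℝ (⊤:ℕ∞) f U) {x : V4} (hx : x ∈ U) : DifferentiableAt ℝ f x :=
  (hf.differentiableOn (by simp) x hx).differentiableAt (hU.mem_nhds hx)

end Stmt14Aux

open Stmt14Aux Metric MeasureTheory Set

/-- General local form of the residual radiation-gauge vectors on a pp-wave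
background. -/
theorem stmt14 (U : Set V4) (hUopen : IsOpen U) (hUconv : Convex ℝ U)
    (ξl ξn : V4 → ℝ) (ξm : V4 → ℂ)
    (hl : ContDiffOn ℝ (⊤ : ℕ∞) ξl U) (hn : ContDiffOn ℝ (⊤ : ℕ∞) ξn U)
    (hm : ContDiffOn ℝ (⊤ : ℕ∞) ξm U)
    (e1 : ∀ x ∈ U, pdR 0 ξl x = 0)
    (e2 : ∀ x ∈ U, pdC 0 (fun y => (starRingEnd ℂ) (ξm y)) x
      - pdZ (fun y => (ξl y : ℂ)) x = 0)
    (e3 : ∀ x ∈ U, pdC 0 ξm x - pdZb (fun y => (ξl y : ℂ)) x = 0)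
    (e4 : ∀ x ∈ U, pdR 0 ξn x + pdR 1 ξl x = 0)
    (e5 : ∀ x ∈ U, pdZb (fun y => (starRingEnd ℂ) (ξm y)) x + pdZ ξm x = 0) :
    ∀ p ∈ U, ∃ W : Set V4, IsOpen W ∧ p ∈ W ∧ W ⊆ U ∧
      ∃ f1 f2 f3 f4 : V4 → ℂ,
        ContDiffOn ℝ (⊤ : ℕ∞) f1 W ∧ ContDiffOn ℝ (⊤ : ℕ∞) f2 W ∧
        ContDiffOn ℝ (⊤ : ℕ∞) f3 W ∧ ContDiffOn ℝ (⊤ : ℕ∞) f4 W ∧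
        (∀ x ∈ W, pdC 0 f1 x = 0 ∧ pdZb f1 x = 0) ∧
        (∀ x ∈ W, pdC 0 f2 x = 0 ∧ pdZ f2 x = 0) ∧
        (∀ x ∈ W, pdC 0 f3 x = 0) ∧
        (∀ x ∈ W, pdC 0 f4 x = 0) ∧
        (∀ x ∈ W, (ξl x : ℂ) = f1 x + f2 x) ∧
        (∀ x ∈ W, (starRingEnd ℂ) (ξm x) = (x 0 : ℂ) * pdZ f1 x + f3 x) ∧
        (∀ x ∈ W, (ξn x : ℂ) =
          -((x 0 : ℂ)) * (pdC 1 f1 x + pdC 1 f2 x) + f4 x) := by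
  intro p hp
  set S : ℂ := ((Real.sqrt 2 : ℝ) : ℂ) with hSdef
  have hSne : S ≠ 0 := sq2_ne
  -- complexified functions
  set ξlC : V4 → ℂ := fun y => ((ξl y : ℝ) : ℂ) with hξlC
  set ξnC : V4 → ℂ := fun y => ((ξn y : ℝ) : ℂ) with hξnC
  set ξmb : V4 → ℂ := fun y => (starRingEnd ℂ) (ξm y) with hξmb
  have hlC : ContDiffOn ℝ (⊤:ℕ∞) ξlC U := Complex.ofRealCLM.contDiff.comp_contDiffOn hl
  have hnC : ContDiffOn ℝ (⊤:ℕ∞) ξnC U := Complex.ofRealCLM.contDiff.comp_contDiffOn hn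
  have hmb : ContDiffOn ℝ (⊤:ℕ∞) ξmb U := by
    have : ξmb = fun y => (Complex.conjCLE : ℂ ≃L[ℝ] ℂ) (ξm y) := rfl
    rw [this]
    exact Complex.conjCLE.contDiff.comp_contDiffOn hm
  set g : V4 → ℂ := pdZ ξlC with hgdef
  have hg_sm : ContDiffOn ℝ (⊤:ℕ∞) g U := pdZ_smooth hUopen hlC
  -- basic facts on U
  have E1C : ∀ y ∈ U, pdC 0 ξlC y = 0 := by
    intro y hy
    rw [hξlC, pdC_ofReal (diffAtR hUopen hl hy), e1 y hy, Complex.ofReal_zero]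
  have E2' : ∀ y ∈ U, pdC 0 ξmb y = g y := fun y hy => sub_eq_zero.mp (e2 y hy)
  have E3' : ∀ y ∈ U, pdC 0 ξm y = pdZb ξlC y := fun y hy => sub_eq_zero.mp (e3 y hy)
  have hdl2 : ∀ y ∈ U, DifferentiableAt ℝ (pdC 2 ξlC) y :=
    fun y hy => diffAt hUopen (pdC_smooth hUopen hlC 2) hy
  have hdl3 : ∀ y ∈ U, DifferentiableAt ℝ (pdC 3 ξlC) y :=
    fun y hy => diffAt hUopen (pdC_smooth hUopen hlC 3) hy
  -- pdC 0 g = 0 on U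
  have hg_u : ∀ y ∈ U, pdC 0 g y = 0 := by
    intro y hy
    have expand : pdC 0 g y = (pdC 0 (pdC 2 ξlC) y - Complex.I * pdC 0 (pdC 3 ξlC) y) / S :=
      pdC_comb' (hdl2 y hy) (hdl3 y hy) 0 S Complex.I
    rw [expand, pdC_comm hUopen hlC hy 0 2, pdC_comm hUopen hlC hy 0 3,
      pdC_congr_zero hUopen E1C hy 2, pdC_congr_zero hUopen E1C hy 3]
    simp
  -- pdZb g = 0 on U
  have hg_zb : ∀ y ∈ U, pdZb g y = 0 := by
    intro y hy
    set k : V4 → ℂ := pdZb ξlC with hkdef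
    -- second derivative abbreviations
    have s1 : pdC 2 g y = pdC 0 (pdC 2 ξmb) y := by
      rw [pdC_congr hUopen (fun w hw => (E2' w hw).symm) hy 2, pdC_comm hUopen hmb hy 2 0]
    have s2 : pdC 3 g y = pdC 0 (pdC 3 ξmb) y := by
      rw [pdC_congr hUopen (fun w hw => (E2' w hw).symm) hy 3, pdC_comm hUopen hmb hy 3 0]
    have t1 : pdC 2 k y = pdC 0 (pdC 2 ξm) y := by
      rw [hkdef, pdC_congr hUopen (fun w hw => (E3' w hw).symm) hy 2, pdC_comm hUopen hm hy 2 0]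
    have t2 : pdC 3 k y = pdC 0 (pdC 3 ξm) y := by
      rw [hkdef, pdC_congr hUopen (fun w hw => (E3' w hw).symm) hy 3, pdC_comm hUopen hm hy 3 0]
    -- apply ∂_u to e5
    have he5 : pdC 0 (fun w => pdZb ξmb w + pdZ ξm w) y = 0 :=
      pdC_congr_zero hUopen e5 hy 0
    have hsplit : pdC 0 (fun w => pdZb ξmb w + pdZ ξm w) y
        = pdC 0 (pdZb ξmb) y + pdC 0 (pdZ ξm) y :=
      pdC_add (diffAt hUopen (pdZb_smooth hUopen hmb) hy)
        (diffAt hUopen (pdZ_smooth hUopen hm) hy) 0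
    have hmb2 : pdC 0 (pdZb ξmb) y
        = (pdC 0 (pdC 2 ξmb) y + Complex.I * pdC 0 (pdC 3 ξmb) y) / S :=
      pdC_comb (diffAt hUopen (pdC_smooth hUopen hmb 2) hy)
        (diffAt hUopen (pdC_smooth hUopen hmb 3) hy) 0 S Complex.I
    have hm2 : pdC 0 (pdZ ξm) y
        = (pdC 0 (pdC 2 ξm) y - Complex.I * pdC 0 (pdC 3 ξm) y) / S :=
      pdC_comb' (diffAt hUopen (pdC_smooth hUopen hm 2) hy)
        (diffAt hUopen (pdC_smooth hUopen hm 3) hy) 0 S Complex.I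
    -- identify with pdZb g and pdZ k
    have key1 : pdC 0 (pdZb ξmb) y = pdZb g y := by
      rw [hmb2, ← s1, ← s2]; rfl
    have key2 : pdC 0 (pdZ ξm) y = pdZ k y := by
      rw [hm2, ← t1, ← t2]; rfl
    have hsum : pdZb g y + pdZ k y = 0 := by
      rw [← key1, ← key2, ← hsplit, he5]
    -- pdZ k = pdZb g by symmetry of second derivatives
    have hD : pdC 2 (pdC 3 ξlC) y = pdC 3 (pdC 2 ξlC) y := pdC_comm hUopen hlC hy 2 3
    have hk2 : pdC 2 k y = (pdC 2 (pdC 2 ξlC) y + Complex.I * pdC 2 (pdC 3 ξlC) y) / S :=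
      pdC_comb (hdl2 y hy) (hdl3 y hy) 2 S Complex.I
    have hk3 : pdC 3 k y = (pdC 3 (pdC 2 ξlC) y + Complex.I * pdC 3 (pdC 3 ξlC) y) / S :=
      pdC_comb (hdl2 y hy) (hdl3 y hy) 3 S Complex.I
    have hg2 : pdC 2 g y = (pdC 2 (pdC 2 ξlC) y - Complex.I * pdC 2 (pdC 3 ξlC) y) / S :=
      pdC_comb' (hdl2 y hy) (hdl3 y hy) 2 S Complex.I
    have hg3 : pdC 3 g y = (pdC 3 (pdC 2 ξlC) y - Complex.I * pdC 3 (pdC 3 ξlC) y) / S :=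
      pdC_comb' (hdl2 y hy) (hdl3 y hy) 3 S Complex.I
    have heq : pdZ k y = pdZb g y := by
      show (pdC 2 k y - Complex.I * pdC 3 k y) / S = (pdC 2 g y + Complex.I * pdC 3 g y) / S
      rw [hk2, hk3, hg2, hg3, hD]
      field_simp
      ring
    rw [heq] at hsum
    linear_combination hsum / 2
  -- choose radii
  obtain ⟨ε, hε, hball⟩ := Metric.isOpen_iff.1 hUopen p hp
  set r : ℝ := ε/4 with hrdef
  have hr : 0 < r := by positivity
  have hcb : closedBall p (2*r) ⊆ U := by
    refine subset_trans ?_ hball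
    apply closedBall_subset_ball
    rw [hrdef]; linarith
  have hWU : ball p r ⊆ U := by
    refine subset_trans ?_ hcb
    refine subset_trans (ball_subset_closedBall) (closedBall_subset_closedBall (by linarith))
  -- bump
  set φb : ContDiffBump p := ⟨r, 2*r, hr, by linarith⟩ with hφb
  set G : V4 → ℂ := fun y => φb y • g y with hGdef
  have hGsm : ContDiff ℝ (⊤:ℕ∞) G := by
    apply contDiff_iff_contDiffAt.2
    intro y
    by_cases hy : y ∈ U
    · exact (φb.contDiff.contDiffAt).smul ((hg_sm y hy).contDiffAt (hUopen.mem_nhds hy))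
    · have hyc : y ∈ (closedBall p (2*r))ᶜ := fun hmem => hy (hcb hmem)
      have hop : IsOpen ((closedBall p (2*r))ᶜ) := isClosed_closedBall.isOpen_compl
      have hz : ∀ᶠ w in nhds y, G w = 0 := by
        filter_upwards [hop.mem_nhds hyc] with w hw
        have : φb w = 0 := by
          by_contra hnz
          have hsupp : w ∈ Function.support φb := Function.mem_support.2 hnz
          rw [φb.support_eq] at hsupp
          exact hw (ball_subset_closedBall hsupp)
        simp [hGdef, this]
      exact contDiffAt_const.congr_of_eventuallyEq hz
  have hGg : ∀ y ∈ ball p r, G y = g y := by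
    intro y hy
    have : φb y = 1 := φb.one_of_mem_closedBall (ball_subset_closedBall hy)
    simp [hGdef, this]
  have hG_zb : ∀ y ∈ ball p r, pdZb G y = 0 := by
    intro y hy
    show (pdC 2 G y + Complex.I * pdC 3 G y) / S = 0
    rw [pdC_congr isOpen_ball hGg hy 2, pdC_congr isOpen_ball hGg hy 3]
    exact hg_zb y (hWU hy)
  have hG_u : ∀ y ∈ ball p r, pdC 0 G y = 0 := by
    intro y hy
    rw [pdC_congr isOpen_ball hGg hy 0]
    exact hg_u y (hWU hy)
  -- primitive
  obtain ⟨F, hFsm, hF⟩ := exists_primitive p r hr G hGsm hG_zb hG_u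
  set q : V4 → ℂ := pdC 1 ξlC with hqdef
  refine ⟨ball p r, isOpen_ball, mem_ball_self hr, hWU,
    F, fun y => ξlC y - F y, fun y => ξmb y - ((y 0 : ℝ):ℂ) * G y,
    fun y => ξnC y + ((y 0 : ℝ):ℂ) * q y, hFsm.contDiffOn,
    (hlC.mono hWU).sub hFsm.contDiffOn,
    (hmb.mono hWU).sub (((coordC_contDiff 0).contDiffOn).mul hGsm.contDiffOn),
    (hnC.mono hWU).add (((coordC_contDiff 0).contDiffOn).mul
      ((pdC_smooth hUopen hlC 1).mono hWU)),
    ?_, ?_, ?_, ?_, ?_, ?_, ?_⟩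
  · intro x hx
    exact ⟨(hF x hx).1, (hF x hx).2.1⟩
  · intro x hx
    have hxU : x ∈ U := hWU hx
    have hdF : DifferentiableAt ℝ F x := hFsm.differentiable (by simp) x
    constructor
    · rw [pdC_sub (diffAt hUopen hlC hxU) hdF 0, E1C x hxU, (hF x hx).1, sub_zero]
    · rw [pdZ_sub isOpen_ball (hlC.mono hWU) hFsm.contDiffOn hx, (hF x hx).2.2, hGg x hx]
      show g x - g x = 0
      ring
  · intro x hx
    have hxU : x ∈ U := hWU hx
    have hd0 : DifferentiableAt ℝ (fun y : V4 => ((y 0:ℝ):ℂ)) x :=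
      (coordC_contDiff 0).differentiable (by simp) x
    have hdG : DifferentiableAt ℝ G x := hGsm.differentiable (by simp) x
    rw [pdC_sub (b := fun y => ((y 0:ℝ):ℂ) * G y) (diffAt hUopen hmb hxU) (hd0.mul hdG) 0,
      pdC_mul hd0 hdG 0, pdC_coord 0 0, hG_u x hx, E2' x hxU, hGg x hx]
    simp
  · intro x hx
    have hxU : x ∈ U := hWU hx
    have hd0 : DifferentiableAt ℝ (fun y : V4 => ((y 0:ℝ):ℂ)) x :=
      (coordC_contDiff 0).differentiable (by simp) x
    have hdq : DifferentiableAt ℝ q x := diffAt hUopen (pdC_smooth hUopen hlC 1) hxU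
    have hq0 : pdC 0 q x = 0 := by
      rw [hqdef, pdC_comm hUopen hlC hxU 0 1, pdC_congr_zero hUopen E1C hxU 1]
    have hqval : q x = ((pdR 1 ξl x : ℝ):ℂ) := pdC_ofReal (diffAtR hUopen hl hxU) 1
    have hnval : pdC 0 ξnC x = ((pdR 0 ξn x : ℝ):ℂ) := pdC_ofReal (diffAtR hUopen hn hxU) 0
    rw [pdC_add (b := fun y => ((y 0:ℝ):ℂ) * q y) (diffAt hUopen hnC hxU) (hd0.mul hdq) 0,
      pdC_mul hd0 hdq 0, pdC_coord 0 0, hq0, hnval, hqval]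
    have he4 : pdR 0 ξn x = - pdR 1 ξl x := by linarith [e4 x hxU]
    rw [he4]
    push_cast
    ring
  · intro x hx
    show ξlC x = F x + (ξlC x - F x)
    ring
  · intro x hx
    show ξmb x = ((x 0 : ℝ):ℂ) * pdZ F x + (ξmb x - ((x 0:ℝ):ℂ) * G x)
    rw [(hF x hx).2.2]
    ring
  · intro x hx
    have hxU : x ∈ U := hWU hx
    have hdF : DifferentiableAt ℝ F x := hFsm.differentiable (by simp) x
    have hsum : pdC 1 F x + pdC 1 (fun y => ξlC y - F y) x = q x := by
      rw [pdC_sub (diffAt hUopen hlC hxU) hdF 1]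
      rw [hqdef]
      ring
    show ξnC x = -((x 0:ℝ):ℂ) * (pdC 1 F x + pdC 1 (fun y => ξlC y - F y) x)
      + (ξnC x + ((x 0:ℝ):ℂ) * q x)
    rw [hsum]
    ring
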